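/- Let α ∈ (0,1) be irrational with continued fraction convergent denominators (q_t). Define λ(α) = limsup_{t→∞} 1/(q_t ‖q_t α‖), where ‖x‖ is the distance of x to the nearest integer. Then λ(α) ≥ √5. -/

import Mathlib

/-- Distance of a real number to the nearest integer. -/
noncomputable def distNearestInt (x : ℝ) : ℝ := min (Int.fract x) (1 - Int.fract x)

/-- The `t`-th partial quotient of the continued fraction expansion of `α`,
obtained by iterating the Gauss map `y ↦ 1 / fract y`. -/
noncomputable def partialQuotient (α : ℝ) (t : ℕ) : ℤ :=
  ⌊(fun y : ℝ => (Int.fract y)⁻¹)^[t] α⌋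

/-- The denominators `q_t` of the convergents of the continued fraction of `α`,
given by `q_0 = 1`, `q_1 = a_1`, `q_{t+2} = a_{t+2} q_{t+1} + q_t`. -/
noncomputable def convDen (α : ℝ) : ℕ → ℤ
  | 0 => 1
  | 1 => partialQuotient α 1
  | (t + 2) => partialQuotient α (t + 2) * convDen α (t + 1) + convDen α t

/-- The Lagrange constant `λ(α) = limsup_t 1 / (q_t ‖q_t α‖)`, as an extended real. -/
noncomputable def lagrangeConstant (α : ℝ) : EReal :=
  Filter.limsup
    (fun t => ((1 / ((convDen α t : ℝ) * distNearestInt ((convDen α t : ℝ) * α)) : ℝ) : EReal))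
    Filter.atTop

namespace HurwitzAux

/-- fractional parts along the Gauss map orbit -/
noncomputable def bet (α : ℝ) (t : ℕ) : ℝ :=
  Int.fract ((fun y : ℝ => (Int.fract y)⁻¹)^[t] α)

/-- product of the `bet`s -/
noncomputable def D (α : ℝ) (t : ℕ) : ℝ := ∏ i ∈ Finset.range (t + 1), bet α i

/-- numerators -/
noncomputable def pnum (α : ℝ) : ℕ → ℤ
  | 0 => 0
  | 1 => 1
  | (t + 2) => partialQuotient α (t + 2) * pnum α (t + 1) + pnum α t

/-- the quantity `ζ_{t+2} + q_t/q_{t+1}` -/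
noncomputable def Lam (α : ℝ) (t : ℕ) : ℝ :=
  (bet α (t + 1))⁻¹ + (convDen α t : ℝ) / (convDen α (t + 1) : ℝ)

variable {α : ℝ}

theorem irr_iter (hα : Irrational α) :
    ∀ t, Irrational ((fun y : ℝ => (Int.fract y)⁻¹)^[t] α) := by
  intro t
  induction t with
  | zero => exact hα
  | succ n ih =>
      rw [Function.iterate_succ_apply']
      have : Irrational (Int.fract ((fun y : ℝ => (Int.fract y)⁻¹)^[n] α)) := by
        rw [← Int.self_sub_floor]
        exact ih.sub_intCast _
      exact this.inv

theorem bet_irr (hα : Irrational α) (t : ℕ) : Irrational (bet α t) := by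
  rw [bet, ← Int.self_sub_floor]
  exact (irr_iter hα t).sub_intCast _

theorem bet_pos (hα : Irrational α) (t : ℕ) : 0 < bet α t :=
  Int.fract_pos.2 ((irr_iter hα t).ne_int _)

theorem bet_lt_one (t : ℕ) : bet α t < 1 := Int.fract_lt_one _

theorem bet_ne (hα : Irrational α) (t : ℕ) : bet α t ≠ 0 := (bet_pos hα t).ne'

theorem iter_succ_eq (t : ℕ) :
    (fun y : ℝ => (Int.fract y)⁻¹)^[t + 1] α = (bet α t)⁻¹ := by
  rw [Function.iterate_succ_apply']; rfl

/-- `a_{t+1} = 1/β_t - β_{t+1}` -/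
theorem a_eq (t : ℕ) :
    (partialQuotient α (t + 1) : ℝ) = (bet α t)⁻¹ - bet α (t + 1) := by
  have h : bet α (t + 1) = Int.fract ((bet α t)⁻¹) := by rw [bet, iter_succ_eq]
  rw [h, Int.fract, partialQuotient, iter_succ_eq]
  ring

theorem a_pos (hα : Irrational α) (t : ℕ) : 1 ≤ partialQuotient α (t + 1) := by
  rw [partialQuotient, iter_succ_eq]
  refine Int.le_floor.2 ?_
  rw [Int.cast_one]
  exact le_of_lt ((one_lt_inv₀ (bet_pos hα t)).2 (bet_lt_one t))

theorem q_pos (hα : Irrational α) : ∀ t, 1 ≤ convDen α t ∧ convDen α t ≤ convDen α (t + 1) := by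
  intro t
  induction t with
  | zero =>
      refine ⟨le_refl _, ?_⟩
      show (1 : ℤ) ≤ partialQuotient α 1
      exact a_pos hα 0
  | succ n ih =>
      obtain ⟨h1, h2⟩ := ih
      have h1' : 1 ≤ convDen α (n + 1) := le_trans h1 h2
      refine ⟨h1', ?_⟩
      show convDen α (n + 1) ≤ partialQuotient α (n + 2) * convDen α (n + 1) + convDen α n
      have ha := a_pos hα (n + 1)
      nlinarith

theorem q_pos_real (hα : Irrational α) (t : ℕ) : (0 : ℝ) < (convDen α t : ℝ) := by
  have := (q_pos hα t).1; exact_mod_cast lt_of_lt_of_le one_pos this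

theorem D_pos (hα : Irrational α) (t : ℕ) : 0 < D α t :=
  Finset.prod_pos fun i _ => bet_pos hα i

theorem D_succ (t : ℕ) : D α (t + 1) = D α t * bet α (t + 1) := by
  rw [D, D, Finset.prod_range_succ]

/-- the key identity `q_{t+1} D_t + q_t D_{t+1} = 1` -/
theorem keyF (hα : Irrational α) (hmem : α ∈ Set.Ioo (0:ℝ) 1) (t : ℕ) :
    (convDen α (t + 1) : ℝ) * D α t + (convDen α t : ℝ) * D α (t + 1) = 1 := by
  induction t with
  | zero =>
      have hb0 : bet α 0 = α := by
        rw [bet, Function.iterate_zero_apply, Int.fract_eq_self.2 ⟨le_of_lt hmem.1, hmem.2⟩]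
      have hD0 : D α 0 = α := by rw [D, Finset.prod_range_one, hb0]
      have hD1 : D α 1 = α * bet α 1 := by rw [D_succ, hD0]
      have ha := a_eq (α := α) 0
      rw [hb0] at ha
      show (partialQuotient α 1 : ℝ) * D α 0 + (1 : ℤ) * D α 1 = 1
      rw [ha, hD0, hD1]
      have hαne : α ≠ 0 := ne_of_gt hmem.1
      field_simp
      push_cast; ring
  | succ n ih =>
      have hq : (convDen α (n + 2) : ℝ)
          = (partialQuotient α (n + 2) : ℝ) * (convDen α (n + 1) : ℝ) + (convDen α n : ℝ) := by
        show ((partialQuotient α (n + 2) * convDen α (n + 1) + convDen α n : ℤ) : ℝ) = _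
        push_cast; ring
      have ha := a_eq (α := α) (n + 1)
      have hb := bet_ne hα (n + 1)
      rw [hq, ha, D_succ (t := n + 1), D_succ (t := n)]
      rw [D_succ (t := n)] at ih
      linear_combination ih + ((convDen α (n+1) : ℝ) * D α n) * (inv_mul_cancel₀ hb)

/-- `q_t α - p_t = (-1)^t D_t` -/
theorem keyP (hα : Irrational α) (hmem : α ∈ Set.Ioo (0:ℝ) 1) :
    ∀ t, (convDen α t : ℝ) * α - (pnum α t : ℝ) = (-1 : ℝ) ^ t * D α t
      ∧ (convDen α (t+1) : ℝ) * α - (pnum α (t+1) : ℝ) = (-1 : ℝ) ^ (t+1) * D α (t+1) := by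
  have hb0 : bet α 0 = α := by
    rw [bet, Function.iterate_zero_apply, Int.fract_eq_self.2 ⟨le_of_lt hmem.1, hmem.2⟩]
  have hD0 : D α 0 = α := by rw [D, Finset.prod_range_one, hb0]
  intro t
  induction t with
  | zero =>
      constructor
      · show (1 : ℤ) * α - ((0 : ℤ) : ℝ) = (-1 : ℝ) ^ 0 * D α 0
        rw [hD0]; push_cast; ring
      · show (partialQuotient α 1 : ℝ) * α - ((1 : ℤ) : ℝ) = (-1 : ℝ) ^ 1 * D α 1
        have ha := a_eq (α := α) 0
        rw [hb0] at ha
        rw [ha, D_succ, hD0]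
        have hαne : α ≠ 0 := ne_of_gt hmem.1
        push_cast
        field_simp
        ring
  | succ n ih =>
      obtain ⟨ih1, ih2⟩ := ih
      refine ⟨ih2, ?_⟩
      have hq : (convDen α (n + 2) : ℝ)
          = (partialQuotient α (n + 2) : ℝ) * (convDen α (n + 1) : ℝ) + (convDen α n : ℝ) := by
        show ((partialQuotient α (n + 2) * convDen α (n + 1) + convDen α n : ℤ) : ℝ) = _
        push_cast; ring
      have hp : (pnum α (n + 2) : ℝ)
          = (partialQuotient α (n + 2) : ℝ) * (pnum α (n + 1) : ℝ) + (pnum α n : ℝ) := by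
        show ((partialQuotient α (n + 2) * pnum α (n + 1) + pnum α n : ℤ) : ℝ) = _
        push_cast; ring
      have ha := a_eq (α := α) (n + 1)
      have hb := bet_ne hα (n + 1)
      rw [hq, hp, D_succ (t := n + 1), D_succ (t := n)]
      rw [D_succ (t := n)] at ih2
      calc ((partialQuotient α (n+2) : ℝ) * (convDen α (n+1):ℝ) + (convDen α n : ℝ)) * α
            - ((partialQuotient α (n+2) : ℝ) * (pnum α (n+1):ℝ) + (pnum α n : ℝ))
          = (partialQuotient α (n+2) : ℝ) * ((convDen α (n+1):ℝ) * α - (pnum α (n+1):ℝ))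
            + ((convDen α n : ℝ) * α - (pnum α n : ℝ)) := by ring
        _ = ((bet α (n+1))⁻¹ - bet α (n+2)) * ((-1:ℝ)^(n+1) * (D α n * bet α (n+1)))
            + (-1:ℝ)^n * D α n := by rw [ih2, ih1, ha]
        _ = (-1:ℝ)^(n+2) * (D α n * bet α (n+1) * bet α (n+2)) := by
            field_simp
            ring
  
theorem dist_le_abs (x : ℝ) (n : ℤ) : distNearestInt x ≤ |x - n| := by
  have hf : Int.fract x = x - ⌊x⌋ := (Int.self_sub_floor x).symm
  rcases le_or_gt (n : ℝ) (⌊x⌋ : ℝ) with h | h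
  · calc distNearestInt x ≤ Int.fract x := min_le_left _ _
      _ ≤ x - n := by rw [hf]; linarith
      _ ≤ |x - n| := le_abs_self _
  · have hn : (⌊x⌋ : ℝ) + 1 ≤ (n : ℝ) := by
      have : ⌊x⌋ + 1 ≤ n := by exact_mod_cast h
      exact_mod_cast this
    calc distNearestInt x ≤ 1 - Int.fract x := min_le_right _ _
      _ ≤ -(x - n) := by rw [hf]; linarith
      _ ≤ |x - n| := neg_le_abs _
theorem dist_pos_of_irr {x : ℝ} (h : Irrational x) : 0 < distNearestInt x := by
  have h1 : 0 < Int.fract x := Int.fract_pos.2 (h.ne_int _)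
  have h2 : Int.fract x < 1 := Int.fract_lt_one x
  exact lt_min h1 (by linarith)

theorem qmul_irr (hα : Irrational α) (t : ℕ) : Irrational ((convDen α t : ℝ) * α) :=
  hα.intCast_mul (by have := (q_pos hα t).1; omega)

theorem dist_le_D (hα : Irrational α) (hmem : α ∈ Set.Ioo (0:ℝ) 1) (t : ℕ) :
    distNearestInt ((convDen α t : ℝ) * α) ≤ D α t := by
  have h := (keyP hα hmem t).1
  have h2 := dist_le_abs ((convDen α t : ℝ) * α) (pnum α t)
  have habs : |(convDen α t : ℝ) * α - (pnum α t : ℝ)| = D α t := by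
    rw [h, abs_mul, abs_pow, abs_neg, abs_one, one_pow, one_mul,
      abs_of_pos (D_pos hα t)]
  linarith

theorem lam_eq (hα : Irrational α) (hmem : α ∈ Set.Ioo (0:ℝ) 1) (t : ℕ) :
    1 / ((convDen α (t+1) : ℝ) * D α (t+1)) = Lam α t := by
  have hF := keyF hα hmem t
  have hq1 := q_pos_real hα (t+1)
  have hD := D_pos hα t
  have hb := bet_pos hα (t+1)
  have : Lam α t = ((convDen α (t+1) : ℝ) * D α t + (convDen α t : ℝ) * D α (t+1))
      / ((convDen α (t+1) : ℝ) * D α (t+1)) := by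
    rw [Lam, D_succ]
    field_simp
  rw [this, hF]

theorem lam_le (hα : Irrational α) (hmem : α ∈ Set.Ioo (0:ℝ) 1) (t : ℕ) :
    Lam α t ≤ 1 / ((convDen α (t+1) : ℝ) * distNearestInt ((convDen α (t+1) : ℝ) * α)) := by
  rw [← lam_eq hα hmem t]
  have hq := q_pos_real hα (t+1)
  have hd := dist_pos_of_irr (qmul_irr hα (t+1))
  have hle := dist_le_D hα hmem (t+1)
  apply one_div_le_one_div_of_le (mul_pos hq hd)
  exact mul_le_mul_of_nonneg_left hle hq.le

theorem ratio (hα : Irrational α) (t : ℕ) :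
    (convDen α (t+2) : ℝ) / (convDen α (t+1) : ℝ)
      = (partialQuotient α (t+2) : ℝ) + (convDen α t : ℝ) / (convDen α (t+1) : ℝ) := by
  have hq1 := (q_pos_real hα (t+1)).ne'
  have hrec : (convDen α (t+2) : ℝ)
      = (partialQuotient α (t+2) : ℝ) * (convDen α (t+1) : ℝ) + (convDen α t : ℝ) := by
    show ((partialQuotient α (t+2) * convDen α (t+1) + convDen α t : ℤ) : ℝ) = _
    push_cast; ring
  rw [hrec]
  field_simp

theorem sqrt5_sq : Real.sqrt 5 ^ 2 = 5 := Real.sq_sqrt (by norm_num)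

theorem sqrt5_gt : (2:ℝ) < Real.sqrt 5 := by
  nlinarith [Real.sqrt_nonneg 5, sqrt5_sq]

theorem stepA (hα : Irrational α) (hmem : α ∈ Set.Ioo (0:ℝ) 1) (t : ℕ)
    (h1 : Lam α t ≤ Real.sqrt 5) (h2 : Lam α (t+1) ≤ Real.sqrt 5) :
    (Real.sqrt 5 - 1) / 2 ≤ (convDen α (t+1) : ℝ) / (convDen α (t+2) : ℝ) := by
  have hs2 := sqrt5_sq
  have hs1 := sqrt5_gt
  set s := Real.sqrt 5
  have hq1 := q_pos_real hα (t+1)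
  have hq2 := q_pos_real hα (t+2)
  set r := (convDen α (t+1) : ℝ) / (convDen α (t+2) : ℝ) with hrdef
  set u := (convDen α (t+2) : ℝ) / (convDen α (t+1) : ℝ) with hudef
  have hur : u * r = 1 := by rw [hrdef, hudef]; field_simp
  have hrpos : 0 < r := div_pos hq1 hq2
  have hupos : 0 < u := div_pos hq2 hq1
  have hb2pos := bet_pos hα (t+2)
  have hb2lt := bet_lt_one (α := α) (t+2)
  have ha : (bet α (t+1))⁻¹ = (partialQuotient α (t+2) : ℝ) + bet α (t+2) := by
    have := a_eq (α := α) (t+1); linarith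
  have hkey : bet α (t+2) + u ≤ s := by
    have heq : bet α (t+2) + u = Lam α t := by
      rw [Lam, ha, hudef, ratio hα t]; ring
    linarith
  have h2' : (bet α (t+2))⁻¹ + r ≤ s := by
    rw [Lam] at h2; exact h2
  set z := (bet α (t+2))⁻¹ with hzdef
  have hz1 : (1:ℝ) < z := one_lt_inv₀ hb2pos |>.2 hb2lt
  have hzinv : z⁻¹ = bet α (t+2) := inv_inv _
  have hz_pos : 0 < z := lt_trans one_pos hz1
  have e1 : z ≤ s - r := by linarith
  have e2 : z⁻¹ ≤ s - u := by rw [hzinv]; linarith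
  have hmul : 1 ≤ (s - r) * (s - u) := by
    have hzi : (0:ℝ) < z⁻¹ := inv_pos.2 hz_pos
    calc (1:ℝ) = z * z⁻¹ := (mul_inv_cancel₀ hz_pos.ne').symm
      _ ≤ (s - r) * (s - u) := mul_le_mul e1 e2 hzi.le (by linarith)
  have hru : r * u = 1 := by rw [mul_comm]; exact hur
  have hsum : r + u ≤ s := by nlinarith [hmul, hru, hs1]
  have hmu := mul_le_mul_of_nonneg_left hsum hrpos.le
  by_contra hcon
  push_neg at hcon
  have f1 : (0:ℝ) < (s-1)/2 - r := by linarith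
  have f2 : (0:ℝ) < (s+1)/2 - r := by linarith
  nlinarith [mul_pos f1 f2, hmu, hru]

theorem irr_sqrt5 : Irrational (Real.sqrt 5) := by
  have := Nat.Prime.irrational_sqrt (p := 5) (by norm_num)
  simpa using this

theorem three (hα : Irrational α) (hmem : α ∈ Set.Ioo (0:ℝ) 1) (t : ℕ) :
    Real.sqrt 5 ≤ Lam α t ∨ Real.sqrt 5 ≤ Lam α (t+1) ∨ Real.sqrt 5 ≤ Lam α (t+2) := by
  by_contra hcon
  push_neg at hcon
  obtain ⟨h0, h1, h2⟩ := hcon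
  have hs2 := sqrt5_sq
  have hs1 := sqrt5_gt
  set s := Real.sqrt 5
  set g := (s - 1)/2 with hgdef
  have g1 : g ≤ (convDen α (t+1) : ℝ) / (convDen α (t+2) : ℝ) := stepA hα hmem t h0.le h1.le
  have g2 : g ≤ (convDen α (t+2) : ℝ) / (convDen α (t+3) : ℝ) := stepA hα hmem (t+1) h1.le h2.le
  have hq2 := q_pos_real hα (t+2)
  have hq3 := q_pos_real hα (t+3)
  have ha3 : (1:ℝ) ≤ (partialQuotient α (t+3) : ℝ) := by exact_mod_cast a_pos hα (t+2)
  have hrat := ratio hα (t+1)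
  have hgpos : 0 < g := by rw [hgdef]; linarith
  have hu3 : 1 + g ≤ (convDen α (t+3) : ℝ) / (convDen α (t+2) : ℝ) := by
    rw [hrat]; linarith
  have hg1 : (1 + g) * g = 1 := by rw [hgdef]; nlinarith [hs2]
  have hr3le : (convDen α (t+2) : ℝ) / (convDen α (t+3) : ℝ) ≤ g := by
    have h1g : (0:ℝ) < 1 + g := by linarith
    have hinv : ((convDen α (t+3) : ℝ) / (convDen α (t+2) : ℝ))⁻¹
        = (convDen α (t+2) : ℝ) / (convDen α (t+3) : ℝ) := by
      rw [inv_div]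
    have hle : ((convDen α (t+3) : ℝ) / (convDen α (t+2) : ℝ))⁻¹ ≤ (1 + g)⁻¹ :=
      inv_anti₀ h1g hu3
    have hginv : (1 + g)⁻¹ = g := by
      field_simp
      linarith [hg1]
    rw [hinv, hginv] at hle
    exact hle
  have hreq : (convDen α (t+2) : ℝ) / (convDen α (t+3) : ℝ) = g := le_antisymm hr3le g2
  have hs_eq : s = 2 * (convDen α (t+2) : ℝ) / (convDen α (t+3) : ℝ) + 1 := by
    rw [hgdef] at hreq
    rw [mul_div_assoc]
    linarith
  apply Rat.not_irrational
    (((2 * convDen α (t+2) + convDen α (t+3) : ℤ) : ℚ) / ((convDen α (t+3) : ℤ) : ℚ))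
  have hcast : ((((2 * convDen α (t+2) + convDen α (t+3) : ℤ) : ℚ)
      / ((convDen α (t+3) : ℤ) : ℚ) : ℚ) : ℝ) = s := by
    push_cast
    rw [hs_eq]
    field_simp
  rw [hcast]
  exact irr_sqrt5

end HurwitzAux

theorem hurwitz_lagrange (α : ℝ) (hα : Irrational α) (hmem : α ∈ Set.Ioo (0:ℝ) 1) :
    (Real.sqrt 5 : EReal) ≤ lagrangeConstant α := by
  rw [lagrangeConstant]
  apply Filter.le_limsup_of_frequently_le'
  rw [Filter.frequently_atTop]
  intro N
  have key : ∀ m : ℕ, Real.sqrt 5 ≤ HurwitzAux.Lam α m →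
      (Real.sqrt 5 : EReal) ≤
        ((1 / ((convDen α (m+1) : ℝ) * distNearestInt ((convDen α (m+1) : ℝ) * α)) : ℝ) : EReal) := by
    intro m hm
    exact EReal.coe_le_coe_iff.2 (le_trans hm (HurwitzAux.lam_le hα hmem m))
  rcases HurwitzAux.three hα hmem N with h | h | h
  · exact ⟨N + 1, by omega, key N h⟩
  · exact ⟨N + 2, by omega, key (N+1) h⟩
  · exact ⟨N + 3, by omega, key (N+2) h⟩
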